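/- Progress for the CPS fragment of the symmetric data/codata calculus: if the closed command c₁ is well-typed (⋄ ⊢ c₁ :cmd with respect to a well-formed program P), then either c₁ = Done or there exists a command c₂ such that c₁ ▷ c₂. -/

import Mathlib

namespace SymCalc

/-! Basic syntactic categories of the symmetric data/codata calculus (CPS fragment). -/

abbrev Var := String
abbrev TName := String
abbrev XName := String

inductive Polarity | dat | cod
deriving DecidableEq, Repr

inductive Orientation | prd | con
deriving DecidableEq, Repr

inductive Strategy | cbv | cbn
deriving DecidableEq, Repr

def Polarity.flip : Polarity → Polarity
  | .dat => .cod | .cod => .dat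

def Orientation.flip : Orientation → Orientation
  | .prd => .con | .con => .prd

def Strategy.flip : Strategy → Strategy
  | .cbv => .cbn | .cbn => .cbv

/-- `val p` : the orientation of the canonical xtors of a type of polarity `p`. -/
def Polarity.val : Polarity → Orientation
  | .dat => .prd | .cod => .con

/-- `cnt p` : the orientation of (co)pattern matches on a type of polarity `p`. -/
def Polarity.cnt : Polarity → Orientation
  | .dat => .con | .cod => .prd

/-- Typing contexts: each variable carries an orientation (producer/consumer) and a type name.
The head of the list is the innermost binding. -/
abbrev Ctx := List (Var × Orientation × TName)

/-- Erase the variable names of a context, keeping orientations and types. -/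
def eraseCtx (Γ : Ctx) : List (Orientation × TName) := Γ.map (·.2)

mutual
/-- Expressions `e ::= x | 𝒳σ | match_p T { 𝒳Δ ⇒ c; … }`. -/
inductive Expr : Type
  | var : Var → Expr
  | xtor : XName → List Expr → Expr
  | mtch : Polarity → TName → List (XName × Ctx × Cmd) → Expr
/-- Commands `c ::= e₁ ≫ e₂ | Done`. -/
inductive Cmd : Type
  | cut : Expr → Expr → Cmd
  | done : Cmd
end

/-! Substitution. -/

abbrev Env := List (Var × Expr)

/-- Remove the bindings shadowed by the bound variables `xs`. -/
def shadowV (xs : List Var) (m : Env) : Env :=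
  m.filter (fun q => ¬ xs.contains q.1)

mutual
/-- Substitute the (closed) expressions of `m` for free variables in an expression. -/
def substExpr (m : Env) : Expr → Expr
  | .var x => (m.lookup x).getD (.var x)
  | .xtor n σ => .xtor n (σ.attach.map (fun ⟨e, _⟩ => substExpr m e))
  | .mtch p T cases =>
      .mtch p T (cases.attach.map
        (fun ⟨cs, _⟩ => (cs.1, cs.2.1, substCmd (shadowV (cs.2.1.map (·.1)) m) cs.2.2)))
termination_by e => sizeOf e
decreasing_by
  · have h := List.sizeOf_lt_of_mem ‹e ∈ σ›
    simp only [Expr.xtor.sizeOf_spec]; omega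
  · have h := List.sizeOf_lt_of_mem ‹cs ∈ cases›
    obtain ⟨n', Δ', c'⟩ := cs
    simp only [Expr.mtch.sizeOf_spec, Prod.mk.sizeOf_spec] at h ⊢; omega
/-- Substitute the (closed) expressions of `m` for free variables in a command. -/
def substCmd (m : Env) : Cmd → Cmd
  | .cut e₁ e₂ => .cut (substExpr m e₁) (substExpr m e₂)
  | .done => .done
termination_by c => sizeOf c
decreasing_by
  · simp only [Cmd.cut.sizeOf_spec]; omega
  · simp only [Cmd.cut.sizeOf_spec]; omega
end

/-- Pair the variables of a context with the expressions of a substitution. -/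
def bindArgs (Δ : Ctx) (σ : List Expr) : Env := List.zip (Δ.map (·.1)) σ

/-! Programs. -/

/-- A function declaration `𝒳Π := match_p T { 𝒴Δ ⇒ c; … }` (co)pattern matching on
all xtors of the type it belongs to. -/
structure FunDecl where
  name : XName
  args : Ctx
  cases : List (XName × Ctx × Cmd)

/-- A type declaration `s p type T { 𝒳Δ; … } with f₁ … fₙ`. -/
structure TypeDecl where
  strat : Strategy
  pol : Polarity
  name : TName
  xtors : List (XName × Ctx)
  funs : List FunDecl

/-- A program: a list of type declarations together with a top-level command. -/
structure Program where
  decls : List TypeDecl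
  main : Cmd

def Program.findType (P : Program) (T : TName) : Option TypeDecl :=
  P.decls.find? (fun td => td.name = T)

/-! Typing. -/

mutual
/-- Expression typing `Γ ⊢ e :ᵒ T` (producer/consumer typing). -/
inductive HasTy (P : Program) : Ctx → Expr → Orientation → TName → Prop
  | var : ∀ Γ x o T, Γ.lookup x = some (o, T) → HasTy P Γ (.var x) o T
  | xtor : ∀ Γ td X Δ τ, td ∈ P.decls → (X, Δ) ∈ td.xtors →
      SubstTy P Γ τ Δ → HasTy P Γ (.xtor X τ) td.pol.val td.name
  | fn : ∀ Γ td f τ, td ∈ P.decls → f ∈ td.funs →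
      SubstTy P Γ τ f.args → HasTy P Γ (.xtor f.name τ) td.pol.cnt td.name
  | mtch : ∀ Γ td cases, td ∈ P.decls →
      cases.map (fun cs => (cs.1, eraseCtx cs.2.1)) = td.xtors.map (fun g => (g.1, eraseCtx g.2)) →
      (∀ cs ∈ cases, CmdTy P (cs.2.1 ++ Γ) cs.2.2) →
      HasTy P Γ (.mtch td.pol td.name cases) td.pol.cnt td.name
/-- Substitution typing `Γ ⊢ σ : Δ`. -/
inductive SubstTy (P : Program) : Ctx → List Expr → Ctx → Prop
  | nil : ∀ Γ, SubstTy P Γ [] []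
  | cons : ∀ Γ σ Δ e x o T, SubstTy P Γ σ Δ → HasTy P Γ e o T →
      SubstTy P Γ (e :: σ) ((x, o, T) :: Δ)
/-- Command typing `Γ ⊢ c :cmd`. -/
inductive CmdTy (P : Program) : Ctx → Cmd → Prop
  | cut : ∀ Γ e₁ e₂ T, HasTy P Γ e₁ .prd T → HasTy P Γ e₂ .con T → CmdTy P Γ (.cut e₁ e₂)
  | done : ∀ Γ, CmdTy P Γ .done
end

/-! Operational semantics. -/

/-- One-step reduction of closed commands, relative to a program `P`. -/
inductive Step (P : Program) : Cmd → Cmd → Prop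
  | mtch : ∀ X σ T cases Δ c, (X, Δ, c) ∈ cases →
      Step P (.cut (.xtor X σ) (.mtch .dat T cases)) (substCmd (bindArgs Δ σ) c)
  | comtch : ∀ X σ T cases Δ c, (X, Δ, c) ∈ cases →
      Step P (.cut (.mtch .cod T cases) (.xtor X σ)) (substCmd (bindArgs Δ σ) c)
  | conCall : ∀ td f Y Δ c σ τ, td ∈ P.decls → td.pol = .dat → f ∈ td.funs →
      (Y, Δ, c) ∈ f.cases →
      Step P (.cut (.xtor Y τ) (.xtor f.name σ))
        (substCmd (bindArgs f.args σ) (substCmd (bindArgs Δ τ) c))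
  | prdCall : ∀ td f Y Δ c σ τ, td ∈ P.decls → td.pol = .cod → f ∈ td.funs →
      (Y, Δ, c) ∈ f.cases →
      Step P (.cut (.xtor f.name σ) (.xtor Y τ))
        (substCmd (bindArgs f.args σ) (substCmd (bindArgs Δ τ) c))

/-! Well-formedness of programs. -/

/-- Well-formedness of a function declaration belonging to the type declaration `td`
(rule Wf-Fun): the (co)pattern match is exhaustive, binds exactly the declared
argument contexts, and each case body typechecks. -/
def FunWf (P : Program) (td : TypeDecl) (f : FunDecl) : Prop :=
  f.cases.map (fun cs => (cs.1, cs.2.1)) = td.xtors ∧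
  ∀ cs ∈ f.cases, CmdTy P (cs.2.1 ++ f.args) cs.2.2

/-- All names used in a program are unambiguous. -/
def NamesUnambiguous (P : Program) : Prop :=
  (P.decls.map (·.name)).Nodup ∧
  (P.decls.flatMap (fun td => td.xtors.map (·.1) ++ td.funs.map (·.name))).Nodup

/-- Well-formedness of programs (rules Wf-Prog and Wf-Type). -/
def Program.wf (P : Program) : Prop :=
  NamesUnambiguous P ∧
  (∀ td ∈ P.decls, ∀ f ∈ td.funs, FunWf P td f) ∧
  CmdTy P [] P.main


lemma decl_eq {P : Program} (h : (P.decls.map (·.name)).Nodup) {td td' : TypeDecl}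
    (h1 : td ∈ P.decls) (h2 : td' ∈ P.decls) (he : td.name = td'.name) : td = td' :=
  List.inj_on_of_nodup_map h h1 h2 he

lemma mtch_case {cases : List (XName × Ctx × Cmd)} {xtors : List (XName × Ctx)}
    (h : cases.map (fun cs => (cs.1, eraseCtx cs.2.1)) = xtors.map (fun g => (g.1, eraseCtx g.2)))
    {X : XName} {Δ : Ctx} (hx : (X, Δ) ∈ xtors) : ∃ Δ' c, (X, Δ', c) ∈ cases := by
  have hm : (X, eraseCtx Δ) ∈ xtors.map (fun g => (g.1, eraseCtx g.2)) :=
    List.mem_map_of_mem (f := fun g => (g.1, eraseCtx g.2)) hx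
  rw [← h] at hm
  obtain ⟨⟨a, b, c⟩, hcs, heq⟩ := List.mem_map.mp hm
  obtain ⟨h1, -⟩ := Prod.mk.injEq .. ▸ heq
  exact ⟨b, c, by simpa [← h1] using hcs⟩

lemma fun_case {f : FunDecl} {xtors : List (XName × Ctx)}
    (h : f.cases.map (fun cs => (cs.1, cs.2.1)) = xtors)
    {X : XName} {Δ : Ctx} (hx : (X, Δ) ∈ xtors) : ∃ c, (X, Δ, c) ∈ f.cases := by
  rw [← h] at hx
  obtain ⟨⟨a, b, c⟩, hcs, heq⟩ := List.mem_map.mp hx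
  obtain ⟨h1, h2⟩ := Prod.mk.injEq .. ▸ heq
  exact ⟨c, by simpa [← h1, ← h2] using hcs⟩

lemma pol_of_val_prd {p : Polarity} (h : p.val = .prd) : p = .dat := by
  cases p <;> simp_all [Polarity.val]

lemma pol_of_val_con {p : Polarity} (h : p.val = .con) : p = .cod := by
  cases p <;> simp_all [Polarity.val]

lemma pol_of_cnt_prd {p : Polarity} (h : p.cnt = .prd) : p = .cod := by
  cases p <;> simp_all [Polarity.cnt]

lemma pol_of_cnt_con {p : Polarity} (h : p.cnt = .con) : p = .dat := by
  cases p <;> simp_all [Polarity.cnt]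

/-- **Progress** (Theorem 3.2): if the closed command `c₁` is well-typed with respect to
a well-formed program `P`, then either `c₁ = Done` or `c₁` takes a step. -/
theorem progress (P : Program) (hP : P.wf) (c₁ : Cmd)
    (h₁ : CmdTy P [] c₁) :
    c₁ = Cmd.done ∨ ∃ c₂, Step P c₁ c₂ := by
  cases h₁ with
  | done => exact Or.inl rfl
  | cut _ e₁ e₂ T ht₁ ht₂ =>
    right
    obtain ⟨⟨hnodT, hnodX⟩, hfw, -⟩ := hP
    generalize hO₁ : Orientation.prd = o₁ at ht₁
    generalize hO₂ : Orientation.con = o₂ at ht₂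
    cases ht₁
    · -- e₁ a variable: impossible in the empty context
      rename_i hl
      exact absurd hl (by simp)
    · -- e₁ an xtor of a data type td
      rename_i td X Δ τ hmem hx hσ
      have hdat : td.pol = .dat := pol_of_val_prd hO₁.symm
      generalize hT : td.name = T' at ht₂
      cases ht₂
      · rename_i hl
        exact absurd hl (by simp)
      · rename_i td' X' Δ' τ' hmem' hx' hσ'
        have hcod' : td'.pol = .cod := pol_of_val_con hO₂.symm
        have hEq : td = td' := decl_eq hnodT hmem hmem' hT
        rw [hEq, hcod'] at hdat
        exact absurd hdat (by simp)
      · rename_i td' f τ' hmem' hf hσ'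
        have hEq : td = td' := decl_eq hnodT hmem hmem' hT
        subst hEq
        obtain ⟨c, hc⟩ := fun_case (hfw td hmem f hf).1 hx
        exact ⟨_, Step.conCall td f X Δ c τ' τ hmem hdat hf hc⟩
      · rename_i td' cases' hmem' hcases hbody
        have hEq : td = td' := decl_eq hnodT hmem hmem' hT
        subst hEq
        obtain ⟨Δ', c, hc⟩ := mtch_case hcases hx
        rw [hdat]
        exact ⟨_, Step.mtch X τ td.name cases' Δ' c hc⟩
    · -- e₁ a function call on a codata type td
      rename_i td f τ hmem hf hσ
      have hcod : td.pol = .cod := pol_of_cnt_prd hO₁.symm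
      generalize hT : td.name = T' at ht₂
      cases ht₂
      · rename_i hl
        exact absurd hl (by simp)
      · rename_i td' X' Δ' τ' hmem' hx' hσ'
        have hEq : td = td' := decl_eq hnodT hmem hmem' hT
        subst hEq
        obtain ⟨c, hc⟩ := fun_case (hfw td hmem f hf).1 hx'
        exact ⟨_, Step.prdCall td f X' Δ' c τ τ' hmem hcod hf hc⟩
      · rename_i td' f' τ' hmem' hf' hσ'
        have hdat' : td'.pol = .dat := pol_of_cnt_con hO₂.symm
        have hEq : td = td' := decl_eq hnodT hmem hmem' hT
        rw [hEq, hdat'] at hcod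
        exact absurd hcod (by simp)
      · rename_i td' cases' hmem' hcases' hbody'
        have hdat' : td'.pol = .dat := pol_of_cnt_con hO₂.symm
        have hEq : td = td' := decl_eq hnodT hmem hmem' hT
        rw [hEq, hdat'] at hcod
        exact absurd hcod (by simp)
    · -- e₁ a comatch on a codata type td
      rename_i td cases hmem hcases hbody
      have hcod : td.pol = .cod := pol_of_cnt_prd hO₁.symm
      generalize hT : td.name = T' at ht₂
      cases ht₂
      · rename_i hl
        exact absurd hl (by simp)
      · rename_i td' X' Δ' τ' hmem' hx' hσ'
        have hEq : td = td' := decl_eq hnodT hmem hmem' hT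
        subst hEq
        obtain ⟨Δ'', c, hc⟩ := mtch_case hcases hx'
        rw [hcod]
        exact ⟨_, Step.comtch X' τ' td.name cases Δ'' c hc⟩
      · rename_i td' f' τ' hmem' hf' hσ'
        have hdat' : td'.pol = .dat := pol_of_cnt_con hO₂.symm
        have hEq : td = td' := decl_eq hnodT hmem hmem' hT
        rw [hEq, hdat'] at hcod
        exact absurd hcod (by simp)
      · rename_i td' cases' hmem' hcases' hbody'
        have hdat' : td'.pol = .dat := pol_of_cnt_con hO₂.symm
        have hEq : td = td' := decl_eq hnodT hmem hmem' hT
        rw [hEq, hdat'] at hcod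
        exact absurd hcod (by simp)

end SymCalc
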